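/- arXiv:1202.3907 — 2 statements merged into one kernel-verified Lean document; each statement's English description precedes it below -/
import Mathlib

section
/- For all integers k ≥ 2, 2 ≤ j ≤ k, and every p with 0 ≤ p < p̃, the iterates g_p^{∘n}(p) tend to zero at least exponentially fast: there exist a constant C > 0 and λ ∈ (0,1) such that g_p^{∘n}(p) ≤ C · λ^n for all n ≥ 0. -/
open scoped Classical

noncomputable section

/-- The bootstrap recursion map `g_p(x) = p·∑_{i=k-j+1}^{k} C(k,i) xⁱ (1-x)^{k-i}`. -/
def g (k j : ℕ) (p x : ℝ) : ℝ :=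
  p * ∑ i ∈ Finset.Icc (k - j + 1) k, (Nat.choose k i : ℝ) * x ^ i * (1 - x) ^ (k - i)

/-- The critical threshold `p̃`: the supremum of the densities `p ∈ [0,1]` for which
`x = 0` is the unique fixed point of `g_p` in `[0,1]`. -/
def ptilde (k j : ℕ) : ℝ :=
  sSup {p : ℝ | p ∈ Set.Icc (0 : ℝ) 1 ∧ ∀ x ∈ Set.Icc (0 : ℝ) 1, g k j p x = x → x = 0}

lemma g_zero_left (k j : ℕ) (x : ℝ) : g k j 0 x = 0 := by simp [g]

lemma g_at_zero (k j : ℕ) (p : ℝ) : g k j p 0 = 0 := by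
  unfold g
  rw [Finset.sum_eq_zero, mul_zero]
  intro i hi
  simp only [Finset.mem_Icc] at hi
  have hi0 : i ≠ 0 := by omega
  simp [zero_pow hi0]

lemma g_at_one (k j : ℕ) (p : ℝ) (hj : 1 ≤ j) (hjk : j ≤ k) : g k j p 1 = p := by
  unfold g
  rw [Finset.sum_eq_single_of_mem k (by simp only [Finset.mem_Icc]; omega)]
  · simp
  · intro i hi hik
    simp only [Finset.mem_Icc] at hi
    have : k - i ≠ 0 := by omega
    simp [zero_pow this]

lemma g_nonneg (k j : ℕ) (p x : ℝ) (hp : 0 ≤ p) (hx : 0 ≤ x) (hx1 : x ≤ 1) :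
    0 ≤ g k j p x := by
  apply mul_nonneg hp
  apply Finset.sum_nonneg
  intro i _
  have h1 : (0:ℝ) ≤ 1 - x := by linarith
  positivity

lemma continuous_g (k j : ℕ) (p : ℝ) : Continuous (g k j p) := by
  unfold g
  exact continuous_const.mul (continuous_finset_sum _ (fun i _ =>
    ((continuous_const.mul (continuous_pow i)).mul
      ((continuous_const.sub continuous_id).pow (k - i)))))

lemma g_scale (k j : ℕ) (p q x : ℝ) (hq : q ≠ 0) :
    g k j p x = (p / q) * g k j q x := by
  unfold g; field_simp

theorem iterates_exponential_decay (k j : ℕ) (p : ℝ) (hk : 2 ≤ k) (hj : 2 ≤ j) (hjk : j ≤ k)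
    (hp0 : 0 ≤ p) (hp : p < ptilde k j) :
    ∃ C > (0 : ℝ), ∃ lam ∈ Set.Ioo (0 : ℝ) 1, ∀ n : ℕ, (g k j p)^[n] p ≤ C * lam ^ n := by
  set S := {p : ℝ | p ∈ Set.Icc (0 : ℝ) 1 ∧ ∀ x ∈ Set.Icc (0 : ℝ) 1, g k j p x = x → x = 0}
    with hS
  rcases eq_or_lt_of_le hp0 with h0 | hp0'
  · -- p = 0 case
    refine ⟨1, one_pos, 1/2, ⟨by norm_num, by norm_num⟩, ?_⟩
    intro n
    have hz : (g k j p)^[n] p = 0 := by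
      induction n with
      | zero => simpa using h0.symm
      | succ m ih =>
        rw [Function.iterate_succ_apply', ih, g_at_zero]
    rw [hz]
    positivity
  · -- p > 0 case
    have hS_ne : S.Nonempty := by
      refine ⟨0, ⟨le_refl 0, zero_le_one⟩, ?_⟩
      intro x hx hfx
      rw [g_zero_left] at hfx
      exact hfx.symm
    have hS_bdd : BddAbove S := ⟨1, fun q hq => hq.1.2⟩
    obtain ⟨q, hqS, hpq⟩ := exists_lt_of_lt_csSup hS_ne hp
    obtain ⟨⟨hq0, hq1⟩, huniq⟩ := hqS
    have hqpos : 0 < q := lt_trans hp0' hpq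
    have hq1' : q < 1 := by
      rcases lt_or_eq_of_le hq1 with h | h
      · exact h
      · exfalso
        have := huniq 1 ⟨zero_le_one, le_refl 1⟩ (by rw [g_at_one k j q (by omega) hjk, h])
        norm_num at this
    -- key: g_q(x) ≤ x on [0,1]
    have key : ∀ x ∈ Set.Icc (0:ℝ) 1, g k j q x ≤ x := by
      rintro x ⟨hx0, hx1⟩
      by_contra hlt
      push_neg at hlt
      have hxpos : 0 < x := by
        rcases hx0.lt_or_eq with h | h
        · exact h
        · exfalso; rw [← h, g_at_zero] at hlt; linarith
      set f : ℝ → ℝ := fun y => y - g k j q y with hf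
      have hfc : ContinuousOn f (Set.Icc x 1) :=
        (continuous_id.sub (continuous_g k j q)).continuousOn
      have h0mem : (0:ℝ) ∈ Set.Icc (f x) (f 1) := by
        constructor
        · simp only [hf]; linarith
        · simp only [hf, g_at_one k j q (by omega) hjk]; linarith
      obtain ⟨c, hc, hfc0⟩ := intermediate_value_Icc hx1 hfc h0mem
      have hgc : g k j q c = c := by
        simp only [hf] at hfc0; linarith
      have hc0 : c = 0 := huniq c ⟨le_trans hx0 hc.1, hc.2⟩ hgc
      have : x ≤ c := hc.1
      linarith
    set lam := p / q with hlam
    have hlam0 : 0 < lam := div_pos hp0' hqpos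
    have hlam1 : lam < 1 := (div_lt_one hqpos).2 hpq
    refine ⟨p, hp0', lam, ⟨hlam0, hlam1⟩, ?_⟩
    have hp1 : p ≤ 1 := le_of_lt (lt_of_lt_of_le hpq hq1)
    -- main induction
    have main : ∀ n, 0 ≤ (g k j p)^[n] p ∧ (g k j p)^[n] p ≤ p * lam ^ n := by
      intro n
      induction n with
      | zero => simp only [Function.iterate_zero, id_eq, pow_zero, mul_one]; exact ⟨hp0, le_refl p⟩
      | succ m ih =>
        obtain ⟨ih0, ih1⟩ := ih
        have hlampow : lam ^ m ≤ 1 := pow_le_one₀ (le_of_lt hlam0) (le_of_lt hlam1)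
        have hle1 : (g k j p)^[m] p ≤ 1 := by
          calc (g k j p)^[m] p ≤ p * lam ^ m := ih1
            _ ≤ p * 1 := by nlinarith
            _ ≤ 1 := by linarith
        rw [Function.iterate_succ_apply']
        constructor
        · exact g_nonneg k j p _ hp0 ih0 hle1
        · have h1 : g k j p ((g k j p)^[m] p) = lam * g k j q ((g k j p)^[m] p) :=
            g_scale k j p q _ (ne_of_gt hqpos)
          have h2 : g k j q ((g k j p)^[m] p) ≤ (g k j p)^[m] p :=
            key _ ⟨ih0, hle1⟩
          calc g k j p ((g k j p)^[m] p) = lam * g k j q ((g k j p)^[m] p) := h1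
            _ ≤ lam * (p * lam ^ m) := by nlinarith
            _ = p * lam ^ (m + 1) := by ring
    intro n
    exact (main n).2
end
end

section
/- Let L ≥ 0 and p ∈ (0,1). Let Λ_L = {(a,b) ∈ ℤ² : a ≥ 0, b ≥ 0, a+b ≤ L} and let μ be the Bernoulli(p) product measure on {0,1}^{Λ_L}. Then every f : {0,1}^{Λ_L} → ℝ satisfies Var_μ(f) ≤ ∑_{x ∈ Λ_L} μ( Var_x( μ_{Ĉ_x}(f) ) ), where C_x = {z ∈ Λ_L : z·e₁ ≥ x·e₁ and z·e₂ ≥ x·e₂} is the upper-right quadrant of x intersected with Λ_L, Ĉ_x = C_x \ {x}, μ_{Ĉ_x}(f) is the conditional expectation of f given the coordinates outside Ĉ_x, and Var_x is the conditional variance in the coordinate η_x given all other coordinates. -/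
open scoped Classical

noncomputable section

section Bernoulli

variable {V : Type*} [Fintype V] [DecidableEq V]

/-- Bernoulli(p) product weight of a configuration (`true` = occupied, with probability `p`). -/
def wt (p : ℝ) (η : V → Bool) : ℝ := ∏ x : V, if η x then p else 1 - p

/-- Expectation under the Bernoulli(p) product measure μ. -/
def mean (p : ℝ) (f : (V → Bool) → ℝ) : ℝ := ∑ η : V → Bool, wt p η * f η

/-- Probability of an event under the Bernoulli(p) product measure μ. -/
def probEv (p : ℝ) (E : (V → Bool) → Prop) : ℝ := mean p (fun η => if E η then 1 else 0)

/-- Conditional expectation `μ_A(f)` of `f` given the coordinates outside `A`. -/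
def cexp (p : ℝ) (A : Finset V) (f : (V → Bool) → ℝ) (η : V → Bool) : ℝ :=
  ∑ ζ : V → Bool,
    (∏ x : V, if x ∈ A then (if ζ x then p else 1 - p) else (if ζ x = η x then 1 else 0)) * f ζ

/-- Conditional variance `Var_A(f)` on the coordinates of `A` given the remaining coordinates. -/
def cvar (p : ℝ) (A : Finset V) (f : (V → Bool) → ℝ) (η : V → Bool) : ℝ :=
  cexp p A (fun ζ => f ζ ^ 2) η - (cexp p A f η) ^ 2

/-- Variance `Var_μ(f)` under the Bernoulli(p) product measure. -/
def varTot (p : ℝ) (f : (V → Bool) → ℝ) : ℝ := mean p (fun η => f η ^ 2) - (mean p f) ^ 2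

section AuxLemmas
variable {V : Type*} [Fintype V] [DecidableEq V]
/-- Per-site Bernoulli weight. -/
def bp (p : ℝ) (b : Bool) : ℝ := if b then p else 1 - p

/-- The transition kernel of `cexp`. -/
def ker (p : ℝ) (A : Finset V) (η ζ : V → Bool) : ℝ :=
  ∏ x : V, if x ∈ A then bp p (ζ x) else (if ζ x = η x then 1 else 0)

lemma cexp_eq (p : ℝ) (A : Finset V) (f : (V → Bool) → ℝ) (η : V → Bool) :
    cexp p A f η = ∑ ζ : V → Bool, ker p A η ζ * f ζ := rfl

lemma sum_prod_bool (g : V → Bool → ℝ) :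
    ∑ ζ : V → Bool, ∏ x, g x (ζ x) = ∏ x, ∑ b, g x b := by
  rw [Finset.prod_univ_sum (fun _ => (Finset.univ : Finset Bool)) g, Fintype.piFinset_univ]

lemma sum_ker (p : ℝ) (A : Finset V) (η : V → Bool) : ∑ ζ : V → Bool, ker p A η ζ = 1 := by
  unfold ker
  rw [sum_prod_bool (fun x b => if x ∈ A then bp p b else if b = η x then 1 else 0)]
  apply Finset.prod_eq_one
  intro x _
  by_cases hA : x ∈ A <;> cases hη : η x <;> simp [hA, bp, Fintype.sum_bool] <;> ring

lemma wt_mul_ker_symm (p : ℝ) (A : Finset V) (η ζ : V → Bool) :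
    wt p η * ker p A η ζ = wt p ζ * ker p A ζ η := by
  unfold wt ker bp
  rw [← Finset.prod_mul_distrib, ← Finset.prod_mul_distrib]
  apply Finset.prod_congr rfl
  intro x _
  by_cases hA : x ∈ A <;> cases hη : η x <;> cases hζ : ζ x <;> simp [hA] <;> ring

lemma sum_ker_mul (p : ℝ) (A B : Finset V) (η ξ : V → Bool) :
    ∑ ζ : V → Bool, ker p A η ζ * ker p B ζ ξ = ker p (A ∪ B) η ξ := by
  have h : ∀ ζ : V → Bool, ker p A η ζ * ker p B ζ ξ
      = ∏ x, ((if x ∈ A then bp p (ζ x) else if ζ x = η x then 1 else 0) *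
              (if x ∈ B then bp p (ξ x) else if ξ x = ζ x then 1 else 0)) := by
    intro ζ; unfold ker; rw [← Finset.prod_mul_distrib]
  simp_rw [h]
  rw [sum_prod_bool (fun x b => (if x ∈ A then bp p b else if b = η x then 1 else 0) *
              (if x ∈ B then bp p (ξ x) else if ξ x = b then 1 else 0))]
  unfold ker
  apply Finset.prod_congr rfl
  intro x _
  by_cases hA : x ∈ A <;> by_cases hB : x ∈ B <;>
    simp [hA, hB, bp, Fintype.sum_bool] <;> cases hξ : ξ x <;> cases hη : η x <;> simp <;> ring

lemma cexp_comp (p : ℝ) (A B : Finset V) (f : (V → Bool) → ℝ) (η : V → Bool) :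
    cexp p A (cexp p B f) η = cexp p (A ∪ B) f η := by
  simp_rw [cexp_eq, Finset.mul_sum]
  rw [Finset.sum_comm]
  apply Finset.sum_congr rfl
  intro ξ _
  rw [← sum_ker_mul p A B η ξ, Finset.sum_mul]
  apply Finset.sum_congr rfl
  intro ζ _
  ring

lemma mean_mul_cexp (p : ℝ) (A : Finset V) (u v : (V → Bool) → ℝ) :
    mean p (fun η => u η * cexp p A v η) = mean p (fun η => cexp p A u η * v η) := by
  unfold mean
  simp_rw [cexp_eq, Finset.mul_sum, Finset.sum_mul]
  rw [Finset.sum_comm]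
  apply Finset.sum_congr rfl
  intro ζ _
  rw [Finset.mul_sum]
  apply Finset.sum_congr rfl
  intro η _
  have h := wt_mul_ker_symm p A ζ η
  linear_combination (u η * v ζ) * h.symm

lemma cexp_one (p : ℝ) (A : Finset V) (η : V → Bool) :
    cexp p A (fun _ => 1) η = 1 := by
  rw [cexp_eq]
  simp [sum_ker p A η]

lemma mean_cexp (p : ℝ) (A : Finset V) (v : (V → Bool) → ℝ) :
    mean p (cexp p A v) = mean p v := by
  have h := mean_mul_cexp p A (fun _ => 1) v
  simp only [one_mul, cexp_one] at h
  exact h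

lemma cexp_empty (p : ℝ) (f : (V → Bool) → ℝ) (η : V → Bool) :
    cexp p ∅ f η = f η := by
  rw [cexp_eq]
  rw [Finset.sum_eq_single η]
  · simp [ker]
  · intro ζ _ hζ
    have : ∃ x, ζ x ≠ η x := by
      by_contra hc
      push_neg at hc
      exact hζ (funext hc)
    obtain ⟨x, hx⟩ := this
    rw [ker, Finset.prod_eq_zero (Finset.mem_univ x)]
    · ring
    · simp [hx]
  · intro h; exact absurd (Finset.mem_univ η) h

lemma cexp_univ (p : ℝ) (f : (V → Bool) → ℝ) (η : V → Bool) :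
    cexp p (Finset.univ : Finset V) f η = mean p f := by
  rw [cexp_eq]
  unfold mean
  apply Finset.sum_congr rfl
  intro ζ _
  congr 1
  unfold ker wt bp
  simp

lemma sum_wt (p : ℝ) : ∑ η : V → Bool, wt p η = 1 := by
  have := sum_ker p (Finset.univ : Finset V) (fun _ => true)
  unfold ker at this
  unfold wt
  simpa [bp] using this

lemma mean_sub (p : ℝ) (g h : (V → Bool) → ℝ) :
    mean p (fun η => g η - h η) = mean p g - mean p h := by
  unfold mean
  rw [← Finset.sum_sub_distrib]
  apply Finset.sum_congr rfl
  intro η _; ring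

lemma mean_nonneg (p : ℝ) (hp0 : 0 ≤ p) (hp1 : p ≤ 1) (g : (V → Bool) → ℝ)
    (hg : ∀ η, 0 ≤ g η) : 0 ≤ mean p g := by
  apply Finset.sum_nonneg
  intro η _
  apply mul_nonneg _ (hg η)
  apply Finset.prod_nonneg
  intro x _
  cases η x <;> simp <;> linarith


lemma cexp_sub (p : ℝ) (A : Finset V) (g h : (V → Bool) → ℝ) (η : V → Bool) :
    cexp p A (fun ζ => g ζ - h ζ) η = cexp p A g η - cexp p A h η := by
  unfold cexp
  rw [← Finset.sum_sub_distrib]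
  apply Finset.sum_congr rfl
  intro ζ _
  ring

lemma mean_sq_expand (p : ℝ) (a b : (V → Bool) → ℝ) :
    mean p (fun η => (a η - b η) ^ 2)
      = mean p (fun η => a η ^ 2) - 2 * mean p (fun η => a η * b η)
          + mean p (fun η => b η ^ 2) := by
  unfold mean
  rw [Finset.mul_sum, ← Finset.sum_sub_distrib, ← Finset.sum_add_distrib]
  apply Finset.sum_congr rfl
  intro η _
  ring

lemma mean_sub_cexp_sq (p : ℝ) (f : (V → Bool) → ℝ) (B' B : Finset V) (hBB : B' ⊆ B) :
    mean p (fun η => (cexp p B' f η - cexp p B f η) ^ 2)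
      = mean p (fun η => (cexp p B' f η) ^ 2) - mean p (fun η => (cexp p B f η) ^ 2) := by
  set a := cexp p B' f with ha
  set b := cexp p B f with hb
  have hca : ∀ η, cexp p B a η = b η := by
    intro η
    rw [ha, cexp_comp, Finset.union_eq_left.mpr hBB]
  have hcb : ∀ η, cexp p B b η = b η := by
    intro η
    rw [hb, cexp_comp, Finset.union_self]
  have h1 : mean p (fun η => a η * b η) = mean p (fun η => b η * f η) := by
    rw [show (fun η => a η * b η) = (fun η => a η * cexp p B f η) from rfl]
    rw [mean_mul_cexp]
    simp only [hca]
  have h2 : mean p (fun η => b η ^ 2) = mean p (fun η => b η * f η) := by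
    have : mean p (fun η => b η * cexp p B f η) = mean p (fun η => cexp p B b η * f η) :=
      mean_mul_cexp p B b f
    simp only [hcb] at this
    rw [show (fun η => b η ^ 2) = (fun η => b η * b η) from funext fun η => by ring]
    exact this
  have h3 := mean_sq_expand p a b
  rw [h3, h1, ← h2]
  ring

lemma mean_cexp_sq_le (p : ℝ) (hp0 : 0 ≤ p) (hp1 : p ≤ 1) (A : Finset V)
    (u : (V → Bool) → ℝ) :
    mean p (fun η => (cexp p A u η) ^ 2) ≤ mean p (fun η => u η ^ 2) := by
  have h := mean_sub_cexp_sq p u ∅ A (Finset.empty_subset A)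
  simp only [cexp_empty] at h
  have hnn := mean_nonneg p hp0 hp1 (fun η => (u η - cexp p A u η) ^ 2)
    (fun η => sq_nonneg _)
  linarith

lemma step_mono (p : ℝ) (hp0 : 0 ≤ p) (hp1 : p ≤ 1) (f : (V → Bool) → ℝ)
    (B' B : Finset V) (x : V) (hBB : B' ⊆ B) :
    mean p (fun η => (cexp p B f η) ^ 2)
        - mean p (fun η => (cexp p (insert x B) f η) ^ 2)
      ≤ mean p (fun η => (cexp p B' f η) ^ 2)
        - mean p (fun η => (cexp p (insert x B') f η) ^ 2) := by
  have h1 := mean_sub_cexp_sq p f B' B hBB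
  have h2 := mean_sub_cexp_sq p f (insert x B') (insert x B)
    (Finset.insert_subset_insert x hBB)
  have h3 : ∀ η, cexp p (insert x B') f η - cexp p (insert x B) f η
      = cexp p {x} (fun ζ => cexp p B' f ζ - cexp p B f ζ) η := by
    intro η
    rw [cexp_sub]
    have e1 : cexp p {x} (cexp p B' f) η = cexp p (insert x B') f η := by
      rw [cexp_comp]; congr 1
    have e2 : cexp p {x} (cexp p B f) η = cexp p (insert x B) f η := by
      rw [cexp_comp]; congr 1
    rw [e1, e2]
  have h4 := mean_cexp_sq_le p hp0 hp1 {x} (fun ζ => cexp p B' f ζ - cexp p B f ζ)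
  simp only [h3] at h2
  have h5 := mean_sub_cexp_sq p f B' B hBB
  have hnn := mean_nonneg p hp0 hp1 (fun η => (cexp p B' f η - cexp p B f η) ^ 2)
    (fun η => sq_nonneg _)
  linarith

lemma mean_cvar_singleton (p : ℝ) (x : V) (g : (V → Bool) → ℝ) :
    mean p (cvar p {x} g)
      = mean p (fun η => g η ^ 2) - mean p (fun η => (cexp p {x} g η) ^ 2) := by
  unfold cvar
  rw [show mean p (fun η => cexp p {x} (fun ζ => g ζ ^ 2) η - (cexp p {x} g η) ^ 2)
      = mean p (cexp p {x} (fun ζ => g ζ ^ 2)) - mean p (fun η => (cexp p {x} g η) ^ 2) from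
    mean_sub p _ _]
  rw [mean_cexp]

lemma telescope {W : Type*} [DecidableEq W] (key : W → ℕ) (hkey : Function.Injective key)
    (g : Finset W → ℝ) (s : Finset W) :
    ∑ x ∈ s, (g (s.filter fun y => key y < key x)
        - g (insert x (s.filter fun y => key y < key x)))
      = g ∅ - g s := by
  induction s using Finset.strongInduction with
  | _ s ih =>
    rcases s.eq_empty_or_nonempty with rfl | hs
    · simp
    · obtain ⟨m, hm, hmax⟩ := s.exists_max_image key hs
      have herase : s.erase m ⊂ s := Finset.erase_ssubset hm
      have hfm : s.filter (fun y => key y < key m) = s.erase m := by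
        ext y
        simp only [Finset.mem_filter, Finset.mem_erase]
        constructor
        · rintro ⟨hy, hlt⟩
          exact ⟨fun h => by simp [h] at hlt, hy⟩
        · rintro ⟨hne, hy⟩
          refine ⟨hy, lt_of_le_of_ne (hmax y hy) ?_⟩
          exact fun h => hne (hkey h)
      have hterm : ∀ x ∈ s.erase m,
          (g (s.filter fun y => key y < key x)
            - g (insert x (s.filter fun y => key y < key x)))
          = (g ((s.erase m).filter fun y => key y < key x)
            - g (insert x ((s.erase m).filter fun y => key y < key x))) := by
        intro x hx
        have hxs := Finset.mem_of_mem_erase hx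
        have hxm : x ≠ m := Finset.ne_of_mem_erase hx
        have : (s.erase m).filter (fun y => key y < key x)
            = s.filter (fun y => key y < key x) := by
          rw [Finset.filter_erase]
          apply Finset.erase_eq_of_notMem
          simp only [Finset.mem_filter, not_and]
          intro _
          exact not_lt.mpr (hmax x hxs)
        rw [this]
      rw [← Finset.add_sum_erase s _ hm, hfm, Finset.insert_erase hm,
        Finset.sum_congr rfl hterm, ih (s.erase m) herase]
      ring


lemma mean_const (p : ℝ) (c : ℝ) : mean p (fun _ : V → Bool => c) = c := by
  unfold mean
  rw [← Finset.sum_mul, sum_wt, one_mul]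

end AuxLemmas

end Bernoulli

/-- The triangle `Λ_L = {(a,b) ∈ ℤ² : a ≥ 0, b ≥ 0, a + b ≤ L}`. -/
abbrev SiteL (L : ℕ) := {z : Fin (L + 1) × Fin (L + 1) // z.1.val + z.2.val ≤ L}

/-- `y` is the North neighbor `x + e₂` of `x`. -/
def isNorth {L : ℕ} (y x : SiteL L) : Prop :=
  y.1.1.val = x.1.1.val ∧ y.1.2.val = x.1.2.val + 1

/-- `y` is the East neighbor `x + e₁` of `x`. -/
def isEast {L : ℕ} (y x : SiteL L) : Prop :=
  y.1.1.val = x.1.1.val + 1 ∧ y.1.2.val = x.1.2.val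

/-- `C_x`: the upper-right quadrant of `x` intersected with `Λ_L`. -/
def quad {L : ℕ} (x : SiteL L) : Finset (SiteL L) :=
  Finset.univ.filter fun z => x.1.1.val ≤ z.1.1.val ∧ x.1.2.val ≤ z.1.2.val

theorem triangle_variance_decomposition (L : ℕ) (p : ℝ) (hp : p ∈ Set.Ioo (0 : ℝ) 1)
    (f : (SiteL L → Bool) → ℝ) :
    varTot p f ≤ ∑ x : SiteL L, mean p (cvar p {x} (cexp p ((quad x).erase x) f)) := by
  obtain ⟨hp0, hp1⟩ := hp
  have hp0' : (0 : ℝ) ≤ p := le_of_lt hp0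
  have hp1' : p ≤ 1 := le_of_lt hp1
  set key : SiteL L → ℕ := fun x => (L + 1) * (L - (x.1.1.val + x.1.2.val)) + x.1.1.val
    with hkey_def
  have hkey : Function.Injective key := by
    intro x y h
    have hxa : x.1.1.val < L + 1 := x.1.1.isLt
    have hya : y.1.1.val < L + 1 := y.1.1.isLt
    have hxs : x.1.1.val + x.1.2.val ≤ L := x.2
    have hys : y.1.1.val + y.1.2.val ≤ L := y.2
    simp only [hkey_def] at h
    have hmod := congrArg (· % (L + 1)) h
    simp only [Nat.mul_add_mod] at hmod
    rw [Nat.mod_eq_of_lt hxa, Nat.mod_eq_of_lt hya] at hmod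
    have hdiv : L - (x.1.1.val + x.1.2.val) = L - (y.1.1.val + y.1.2.val) := by
      have hmm : (L + 1) * (L - (x.1.1.val + x.1.2.val))
          = (L + 1) * (L - (y.1.1.val + y.1.2.val)) := by omega
      exact Nat.eq_of_mul_eq_mul_left (by omega) hmm
    apply Subtype.ext
    apply Prod.ext <;> apply Fin.ext <;> omega
  have hquad : ∀ x : SiteL L,
      (quad x).erase x ⊆ Finset.univ.filter (fun y => key y < key x) := by
    intro x z hz
    rw [Finset.mem_erase] at hz
    obtain ⟨hzx, hzq⟩ := hz
    rw [quad, Finset.mem_filter] at hzq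
    obtain ⟨-, ha, hb⟩ := hzq
    rw [Finset.mem_filter]
    refine ⟨Finset.mem_univ z, ?_⟩
    have hzs : z.1.1.val + z.1.2.val ≤ L := z.2
    have hxs : x.1.1.val + x.1.2.val ≤ L := x.2
    have hne : x.1.1.val ≠ z.1.1.val ∨ x.1.2.val ≠ z.1.2.val := by
      by_contra hc
      push_neg at hc
      exact hzx (Subtype.ext (Prod.ext (Fin.ext hc.1.symm) (Fin.ext hc.2.symm)))
    have hza : z.1.1.val < L + 1 := z.1.1.isLt
    simp only [hkey_def]
    calc (L + 1) * (L - (z.1.1.val + z.1.2.val)) + z.1.1.val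
        < (L + 1) * (L - (z.1.1.val + z.1.2.val)) + (L + 1) := by omega
      _ = (L + 1) * (L - (z.1.1.val + z.1.2.val) + 1) := by ring
      _ ≤ (L + 1) * (L - (x.1.1.val + x.1.2.val)) := Nat.mul_le_mul_left _ (by omega)
      _ ≤ (L + 1) * (L - (x.1.1.val + x.1.2.val)) + x.1.1.val := Nat.le_add_right _ _
  set T : Finset (SiteL L) → ℝ := fun B => mean p (fun η => (cexp p B f η) ^ 2) with hT
  have htel := telescope key hkey T Finset.univ
  have hTempty : T ∅ = mean p (fun η => f η ^ 2) := by
    simp only [hT, cexp_empty]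
  have hTuniv : T Finset.univ = (mean p f) ^ 2 := by
    simp only [hT, cexp_univ]
    exact mean_const p _
  have hvar : varTot p f = T ∅ - T Finset.univ := by
    rw [hTempty, hTuniv]; rfl
  rw [hvar, ← htel]
  apply Finset.sum_le_sum
  intro x _
  have hsm := step_mono p hp0' hp1' f ((quad x).erase x)
    (Finset.univ.filter fun y => key y < key x) x (hquad x)
  have hcv : mean p (cvar p {x} (cexp p ((quad x).erase x) f))
      = T ((quad x).erase x) - T (insert x ((quad x).erase x)) := by
    rw [mean_cvar_singleton, hT]
    have e : ∀ η, cexp p {x} (cexp p ((quad x).erase x) f) η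
        = cexp p (insert x ((quad x).erase x)) f η := by
      intro η; rw [cexp_comp, Finset.insert_eq]
    simp only [e]
  rw [hcv]
  exact hsm
end
end
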